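/- Every simple outerplanar graph with maximum degree Δ has incidence chromatic number at most Δ + 3. -/

import Mathlib

/-- An incidence of `G` is a pair `(v, vw)` with `G.Adj v w`, encoded as the ordered pair
`(v, w)`.  Two incidences `(v, vw)` and `(v', v'w')` are adjacent if `v = v'`, `w = v'`
or `v = w'`.  A `(k, l)`-incidence coloring is a proper coloring of the incidences with at
most `k` colors such that for every vertex `v` at most `l` colors appear on the incoming
incidences `(u, uv)`. -/
def IsIncColoring {V : Type*} (G : SimpleGraph V) (k l : ℕ) (c : V → V → Fin k) : Prop :=
  (∀ v w v' w' : V, G.Adj v w → G.Adj v' w' → (v, w) ≠ (v', w') →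
      (v = v' ∨ w = v' ∨ v = w') → c v w ≠ c v' w') ∧
  (∀ v : V, {x : Fin k | ∃ u, G.Adj u v ∧ c u v = x}.ncard ≤ l)

/-- `G` has a `(k, l)`-incidence coloring. -/
def HasIncColoring {V : Type*} (G : SimpleGraph V) (k l : ℕ) : Prop :=
  ∃ c : V → V → Fin k, IsIncColoring G k l c

/-- A graph is outerplanar iff it has a one-page book embedding: the vertices can be placed
(injectively) on a line so that no two edges interleave. -/
def Outerplanar {V : Type*} (G : SimpleGraph V) : Prop :=
  ∃ f : V → ℝ, Function.Injective f ∧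
    ∀ a b c d : V, G.Adj a b → G.Adj c d →
      ¬(f a < f c ∧ f c < f b ∧ f b < f d)

/-- A proper incidence coloring of G with k colors: adjacent incidences get different
colors.  (The incidence chromatic number of G is at most k iff such a coloring exists.) -/
def HasProperIncColoring {V : Type*} (G : SimpleGraph V) (k : ℕ) : Prop :=
  ∃ c : V → V → Fin k, ∀ v w v' w' : V, G.Adj v w → G.Adj v' w' → (v, w) ≠ (v', w') →
    (v = v' ∨ w = v' ∨ v = w') → c v w ≠ c v' w'


section aux
variable {V : Type*} [Fintype V] [DecidableEq V]

def BookP (f : V → ℝ) (K : SimpleGraph V) : Prop :=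
  ∀ a b c d : V, K.Adj a b → K.Adj c d → ¬(f a < f c ∧ f c < f b ∧ f b < f d)

lemma deg2_aux (f : V → ℝ) (hf : Function.Injective f) (K : SimpleGraph V)
    [DecidableRel K.Adj] (hbook : BookP f K) (s : Finset V)
    (hsupp : ∀ x y, K.Adj x y → x ∈ s) :
    ∀ (n : ℕ) (a b : ℝ), (s.filter fun x => a < f x ∧ f x < b).card ≤ n →
      (∀ x y, K.Adj x y → a < f x → f x < b → a ≤ f y ∧ f y ≤ b) →
      ∀ c ∈ s, a < f c → f c < b → ∃ v ∈ s, K.degree v ≤ 2 := by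
  intro n
  induction n with
  | zero =>
    intro a b hcard _ c hc hac hcb
    have hmem : c ∈ s.filter (fun x => a < f x ∧ f x < b) :=
      Finset.mem_filter.mpr ⟨hc, hac, hcb⟩
    have : 0 < (s.filter fun x => a < f x ∧ f x < b).card := Finset.card_pos.mpr ⟨c, hmem⟩
    omega
  | succ n ih =>
    intro a b hcard hclosed c hc hac hcb
    by_cases hdeg : K.degree c ≤ 2
    · exact ⟨c, hc, hdeg⟩
    push_neg at hdeg
    have hNcard : 3 ≤ (K.neighborFinset c).card := hdeg
    have hsplit : ((K.neighborFinset c).filter fun x => f c < f x) ∪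
        ((K.neighborFinset c).filter fun x => f x < f c) = K.neighborFinset c := by
      ext x
      simp only [Finset.mem_union, Finset.mem_filter]
      constructor
      · rintro (⟨h, _⟩ | ⟨h, _⟩) <;> exact h
      · intro hx
        have hadj : K.Adj c x := (K.mem_neighborFinset _ _).mp hx
        have hne : f x ≠ f c := fun h => hadj.ne' (hf h)
        rcases (Ne.lt_or_gt hne) with h | h
        · exact Or.inr ⟨hx, h⟩
        · exact Or.inl ⟨hx, h⟩
    have hPQ : 2 ≤ ((K.neighborFinset c).filter fun x => f c < f x).card ∨
        2 ≤ ((K.neighborFinset c).filter fun x => f x < f c).card := by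
      have h1 := Finset.card_union_le ((K.neighborFinset c).filter fun x => f c < f x)
        ((K.neighborFinset c).filter fun x => f x < f c)
      rw [hsplit] at h1
      omega
    have hcmem : c ∈ s.filter fun x => a < f x ∧ f x < b :=
      Finset.mem_filter.mpr ⟨hc, hac, hcb⟩
    rcases hPQ with hP | hQ
    · set P := (K.neighborFinset c).filter fun x => f c < f x with hPdef
      obtain ⟨y, hyP, hymax⟩ := P.exists_max_image f (Finset.card_pos.mp (by omega))
      obtain ⟨y', hy'⟩ := Finset.card_pos.mp
        (by rw [Finset.card_erase_of_mem hyP]; omega : 0 < (P.erase y).card)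
      obtain ⟨hy'ne, hy'P⟩ := Finset.mem_erase.mp hy'
      have hcy : K.Adj c y := (K.mem_neighborFinset _ _).mp (Finset.mem_filter.mp hyP).1
      have hcy' : K.Adj c y' := (K.mem_neighborFinset _ _).mp (Finset.mem_filter.mp hy'P).1
      have hfy : f c < f y := (Finset.mem_filter.mp hyP).2
      have hfy' : f c < f y' := (Finset.mem_filter.mp hy'P).2
      have hy'y : f y' < f y := lt_of_le_of_ne (hymax y' hy'P) (fun h => hy'ne (hf h))
      have hyb : f y ≤ b := (hclosed c y hcy hac hcb).2
      have hclosed' : ∀ x z, K.Adj x z → f c < f x → f x < f y → f c ≤ f z ∧ f z ≤ f y := by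
        intro x z hxz h1 h2
        constructor
        · by_contra h
          push_neg at h
          exact hbook z x c y (K.adj_symm hxz) hcy ⟨h, h1, h2⟩
        · by_contra h
          push_neg at h
          exact hbook c y x z hcy hxz ⟨h1, h2, h⟩
      have hsub : (s.filter fun x => f c < f x ∧ f x < f y) ⊆
          (s.filter fun x => a < f x ∧ f x < b).erase c := by
        intro x hx
        obtain ⟨hxs, h1, h2⟩ := Finset.mem_filter.mp hx
        refine Finset.mem_erase.mpr ⟨?_, Finset.mem_filter.mpr
          ⟨hxs, lt_trans hac h1, lt_of_lt_of_le h2 hyb⟩⟩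
        rintro rfl
        exact lt_irrefl _ h1
      have hcard' : (s.filter fun x => f c < f x ∧ f x < f y).card ≤ n := by
        have h1 := Finset.card_le_card hsub
        rw [Finset.card_erase_of_mem hcmem] at h1
        omega
      exact ih (f c) (f y) hcard' hclosed' y' (hsupp y' c (K.adj_symm hcy')) hfy' hy'y
    · set Q := (K.neighborFinset c).filter fun x => f x < f c with hQdef
      obtain ⟨y, hyQ, hymin⟩ := Q.exists_min_image f (Finset.card_pos.mp (by omega))
      obtain ⟨y', hy'⟩ := Finset.card_pos.mp
        (by rw [Finset.card_erase_of_mem hyQ]; omega : 0 < (Q.erase y).card)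
      obtain ⟨hy'ne, hy'Q⟩ := Finset.mem_erase.mp hy'
      have hcy : K.Adj c y := (K.mem_neighborFinset _ _).mp (Finset.mem_filter.mp hyQ).1
      have hcy' : K.Adj c y' := (K.mem_neighborFinset _ _).mp (Finset.mem_filter.mp hy'Q).1
      have hfy : f y < f c := (Finset.mem_filter.mp hyQ).2
      have hfy' : f y' < f c := (Finset.mem_filter.mp hy'Q).2
      have hy'y : f y < f y' := lt_of_le_of_ne (hymin y' hy'Q) (fun h => hy'ne.symm (hf h))
      have hya : a ≤ f y := (hclosed c y hcy hac hcb).1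
      have hclosed' : ∀ x z, K.Adj x z → f y < f x → f x < f c → f y ≤ f z ∧ f z ≤ f c := by
        intro x z hxz h1 h2
        constructor
        · by_contra h
          push_neg at h
          exact hbook z x y c (K.adj_symm hxz) (K.adj_symm hcy) ⟨h, h1, h2⟩
        · by_contra h
          push_neg at h
          exact hbook y c x z (K.adj_symm hcy) hxz ⟨h1, h2, h⟩
      have hsub : (s.filter fun x => f y < f x ∧ f x < f c) ⊆
          (s.filter fun x => a < f x ∧ f x < b).erase c := by
        intro x hx
        obtain ⟨hxs, h1, h2⟩ := Finset.mem_filter.mp hx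
        refine Finset.mem_erase.mpr ⟨?_, Finset.mem_filter.mpr
          ⟨hxs, lt_of_le_of_lt hya h1, lt_trans h2 hcb⟩⟩
        rintro rfl
        exact lt_irrefl _ h2
      have hcard' : (s.filter fun x => f y < f x ∧ f x < f c).card ≤ n := by
        have h1 := Finset.card_le_card hsub
        rw [Finset.card_erase_of_mem hcmem] at h1
        omega
      exact ih (f y) (f c) hcard' hclosed' y' (hsupp y' c (K.adj_symm hcy')) hy'y hfy'

lemma deg2 (f : V → ℝ) (hf : Function.Injective f) (K : SimpleGraph V)
    [DecidableRel K.Adj] (hbook : BookP f K) (s : Finset V)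
    (hsupp : ∀ x y, K.Adj x y → x ∈ s) (hs : s.Nonempty) :
    ∃ v ∈ s, K.degree v ≤ 2 := by
  obtain ⟨c0, hc0⟩ := hs
  have himg : (s.image f).Nonempty := ⟨f c0, Finset.mem_image_of_mem f hc0⟩
  set a := (s.image f).min' himg - 1 with ha
  set b := (s.image f).max' himg + 1 with hb
  have hmem_bounds : ∀ x ∈ s, a < f x ∧ f x < b := by
    intro x hx
    have h1 := Finset.min'_le _ _ (Finset.mem_image_of_mem f hx)
    have h2 := Finset.le_max' _ _ (Finset.mem_image_of_mem f hx)
    constructor <;> [linarith; linarith]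
  refine deg2_aux f hf K hbook s hsupp (s.filter fun x => a < f x ∧ f x < b).card a b
    le_rfl ?_ c0 hc0 (hmem_bounds c0 hc0).1 (hmem_bounds c0 hc0).2
  intro x y hxy _ _
  have hy := hmem_bounds y (hsupp y x (K.adj_symm hxy))
  exact ⟨le_of_lt hy.1, le_of_lt hy.2⟩

end aux

section aux2
variable {V : Type*} [Fintype V] [DecidableEq V]

def Hgr (G : SimpleGraph V) (s : Finset V) : SimpleGraph V where
  Adj x y := G.Adj x y ∧ x ∈ s ∧ y ∈ s
  symm := ⟨fun _ _ h => ⟨h.1.symm, h.2.2, h.2.1⟩⟩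
  loopless := ⟨fun x h => G.loopless.irrefl x h.1⟩

instance instHgrDec (G : SimpleGraph V) [DecidableRel G.Adj] (s : Finset V) :
    DecidableRel (Hgr G s).Adj :=
  fun x y => inferInstanceAs (Decidable (G.Adj x y ∧ x ∈ s ∧ y ∈ s))

@[simp] lemma Hgr_adj (G : SimpleGraph V) (s : Finset V) (x y : V) :
    (Hgr G s).Adj x y ↔ G.Adj x y ∧ x ∈ s ∧ y ∈ s := Iff.rfl

def Proper {k : ℕ} (K : SimpleGraph V) (c : V → V → Fin k) : Prop :=
  ∀ v w v' w' : V, K.Adj v w → K.Adj v' w' → (v, w) ≠ (v', w') →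
    (v = v' ∨ w = v' ∨ v = w') → c v w ≠ c v' w'

lemma tw_ne_nr {k : ℕ} {K : SimpleGraph V} {c : V → V → Fin k}
    (hp : Proper K c) {u z w : V} (hz : K.Adj z u) (hw : K.Adj u w) : c z u ≠ c u w := by
  refine hp z u u w hz hw ?_ (Or.inr (Or.inl rfl))
  simp only [ne_eq, Prod.mk.injEq, not_and]
  intro h
  exact absurd h hz.ne

lemma exists_notMem_of_card_lt {k : ℕ} (F : Finset (Fin k)) (h : F.card < k) :
    ∃ a, a ∉ F := by
  by_contra hcon
  push_neg at hcon
  have hsub : (Finset.univ : Finset (Fin k)) ⊆ F := fun a _ => hcon a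
  have := Finset.card_le_card hsub
  simp only [Finset.card_univ, Fintype.card_fin] at this
  omega

lemma main_empty (G : SimpleGraph V) [DecidableRel G.Adj] :
    ∃ c : V → V → Fin (G.maxDegree + 3), Proper (Hgr G (∅ : Finset V)) c ∧
      ∀ u : V, (((Hgr G (∅ : Finset V)).neighborFinset u).image fun w => c w u).card ≤ 2 := by
  refine ⟨fun _ _ => ⟨0, by omega⟩, ?_, ?_⟩
  · intro v w v' w' h1 _ _ _
    exact absurd h1.2.1 (Finset.notMem_empty v)
  · intro u
    have h : (Hgr G (∅ : Finset V)).neighborFinset u = ∅ := by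
      ext z
      simp [SimpleGraph.mem_neighborFinset]
    rw [h]
    simp

end aux2
section mainsec
variable {V : Type*} [Fintype V] [DecidableEq V]

set_option maxHeartbeats 1000000 in
lemma main_lem (G : SimpleGraph V) [DecidableRel G.Adj] (f : V → ℝ)
    (hf : Function.Injective f) (hbook : BookP f G) :
    ∀ (n : ℕ) (s : Finset V), s.card ≤ n →
      ∃ c : V → V → Fin (G.maxDegree + 3), Proper (Hgr G s) c ∧
        ∀ u : V, (((Hgr G s).neighborFinset u).image fun w => c w u).card ≤ 2 := by
  intro n
  induction n with
  | zero =>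
    intro s hs
    have hs0 : s = ∅ := Finset.card_eq_zero.mp (Nat.le_zero.mp hs)
    subst hs0
    exact main_empty G
  | succ n ih =>
    intro s hs
    rcases s.eq_empty_or_nonempty with rfl | hne
    · exact main_empty G
    have hbookK : BookP f (Hgr G s) := fun a b c d hab hcd => hbook a b c d hab.1 hcd.1
    have hsupp : ∀ x y, (Hgr G s).Adj x y → x ∈ s := fun x y h => h.2.1
    obtain ⟨v, hvs, hvdeg⟩ := deg2 f hf (Hgr G s) hbookK s hsupp hne
    set s' := s.erase v with hs'def
    have hcard' : s'.card ≤ n := by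
      rw [hs'def, Finset.card_erase_of_mem hvs]; omega
    obtain ⟨c', hp', ht'⟩ := ih s' hcard'
    have hv_not_s' : v ∉ s' := Finset.notMem_erase v s
    have hadj_mono : ∀ x y, (Hgr G s').Adj x y → (Hgr G s).Adj x y := fun x y h =>
      ⟨h.1, Finset.mem_of_mem_erase h.2.1, Finset.mem_of_mem_erase h.2.2⟩
    have hadj_old : ∀ x y, (Hgr G s).Adj x y → x ≠ v → y ≠ v → (Hgr G s').Adj x y :=
      fun x y h hx hy => ⟨h.1, Finset.mem_erase.mpr ⟨hx, h.2.1⟩, Finset.mem_erase.mpr ⟨hy, h.2.2⟩⟩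
    have hvdeg' : ((Hgr G s).neighborFinset v).card ≤ 2 := hvdeg
    have h012 : ((Hgr G s).neighborFinset v).card = 0 ∨
        ((Hgr G s).neighborFinset v).card = 1 ∨ ((Hgr G s).neighborFinset v).card = 2 := by
      omega
    rcases h012 with h0 | h1 | h2
    -- CASE 0
    · have hNv : (Hgr G s).neighborFinset v = ∅ := Finset.card_eq_zero.mp h0
      have hnoadj : ∀ y, ¬(Hgr G s).Adj v y := by
        intro y h
        have hy : y ∈ (Hgr G s).neighborFinset v := ((Hgr G s).mem_neighborFinset _ _).mpr h
        rw [hNv] at hy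
        exact absurd hy (Finset.notMem_empty y)
      have hvx : ∀ x y, (Hgr G s).Adj x y → x ≠ v ∧ y ≠ v := by
        intro x y h
        constructor
        · rintro rfl; exact hnoadj y h
        · rintro rfl; exact hnoadj x ((Hgr G s).adj_symm h)
      refine ⟨c', ?_, ?_⟩
      · intro x y x' y' h1 h2 hne12 hdisj
        obtain ⟨hx, hy⟩ := hvx x y h1
        obtain ⟨hx', hy'⟩ := hvx x' y' h2
        exact hp' x y x' y' (hadj_old x y h1 hx hy) (hadj_old x' y' h2 hx' hy') hne12 hdisj
      · intro u
        have heq : (Hgr G s).neighborFinset u = (Hgr G s').neighborFinset u := by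
          ext z
          simp only [SimpleGraph.mem_neighborFinset]
          constructor
          · intro h
            obtain ⟨hu, hz⟩ := hvx u z h
            exact hadj_old u z h hu hz
          · exact hadj_mono u z
        rw [heq]
        exact ht' u
    -- CASE 1
    · obtain ⟨u1, hNv⟩ := Finset.card_eq_one.mp h1
      have hvu1 : (Hgr G s).Adj v u1 := by
        have hm : u1 ∈ (Hgr G s).neighborFinset v := by
          rw [hNv]; exact Finset.mem_singleton_self u1
        exact ((Hgr G s).mem_neighborFinset _ _).mp hm
      have hu1v : u1 ≠ v := hvu1.ne'
      have hGvu1 : G.Adj v u1 := hvu1.1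
      have hD1 : 1 ≤ G.maxDegree := by
        have hdv : (G.neighborFinset v).card = G.degree v := rfl
        have h1' : 0 < (G.neighborFinset v).card :=
          Finset.card_pos.mpr ⟨u1, (G.mem_neighborFinset _ _).mpr hGvu1⟩
        have h2' := G.degree_le_maxDegree v
        omega
      set Nr1 := ((Hgr G s').neighborFinset u1).image (fun w => c' u1 w) with hNr1def
      set Tw1 := ((Hgr G s').neighborFinset u1).image (fun w => c' w u1) with hTw1def
      have hdsub : (Hgr G s').neighborFinset u1 ⊆ (G.neighborFinset u1).erase v := by
        intro z hz
        have hz' := ((Hgr G s').mem_neighborFinset _ _).mp hz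
        refine Finset.mem_erase.mpr ⟨?_, (G.mem_neighborFinset _ _).mpr hz'.1⟩
        rintro rfl
        exact hv_not_s' hz'.2.2
      have hdu1 : ((Hgr G s').neighborFinset u1).card ≤ G.maxDegree - 1 := by
        have ha := Finset.card_le_card hdsub
        rw [Finset.card_erase_of_mem ((G.mem_neighborFinset _ _).mpr (G.adj_symm hGvu1))] at ha
        have hb : (G.neighborFinset u1).card = G.degree u1 := rfl
        have hc := G.degree_le_maxDegree u1
        omega
      have hNr1card : Nr1.card ≤ G.maxDegree - 1 := le_trans Finset.card_image_le hdu1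
      have hTw1card : Tw1.card ≤ 2 := ht' u1
      obtain ⟨α1, hA1, hF4⟩ : ∃ α1 : Fin (G.maxDegree + 3),
          (∀ z, (Hgr G s').Adj u1 z → α1 ≠ c' u1 z) ∧ (α1 ∈ Tw1 ∨ Tw1 = ∅) := by
        rcases Tw1.eq_empty_or_nonempty with hT | ⟨α1, hα1⟩
        · obtain ⟨α1, hα1⟩ := exists_notMem_of_card_lt Nr1 (by omega)
          refine ⟨α1, ?_, Or.inr hT⟩
          intro z hz h
          exact hα1 (h ▸ Finset.mem_image_of_mem _ (((Hgr G s').mem_neighborFinset _ _).mpr hz))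
        · refine ⟨α1, ?_, Or.inl hα1⟩
          rw [hTw1def] at hα1
          obtain ⟨w, hw, rfl⟩ := Finset.mem_image.mp hα1
          intro z hz
          exact tw_ne_nr hp' ((Hgr G s').adj_symm (((Hgr G s').mem_neighborFinset _ _).mp hw)) hz
      obtain ⟨β1, hβ1⟩ := exists_notMem_of_card_lt (Nr1 ∪ Tw1 ∪ {α1}) (by
        have h1' := Finset.card_union_le (Nr1 ∪ Tw1) ({α1} : Finset (Fin (G.maxDegree + 3)))
        have h2' := Finset.card_union_le Nr1 Tw1
        have h3' : ({α1} : Finset (Fin (G.maxDegree + 3))).card = 1 := Finset.card_singleton α1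
        omega)
      simp only [Finset.mem_union, Finset.mem_singleton, not_or] at hβ1
      obtain ⟨⟨hβ1Nr, hβ1Tw⟩, hβ1α⟩ := hβ1
      have hB1n : ∀ z, (Hgr G s').Adj u1 z → β1 ≠ c' u1 z := by
        intro z hz h
        exact hβ1Nr (h ▸ Finset.mem_image_of_mem _ (((Hgr G s').mem_neighborFinset _ _).mpr hz))
      have hB1t : ∀ z, (Hgr G s').Adj z u1 → β1 ≠ c' z u1 := by
        intro z hz h
        exact hβ1Tw (h ▸ Finset.mem_image_of_mem _
          (((Hgr G s').mem_neighborFinset _ _).mpr ((Hgr G s').adj_symm hz)))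
      set c : V → V → Fin (G.maxDegree + 3) := fun x y =>
        if x = v ∧ y = u1 then α1 else if x = u1 ∧ y = v then β1 else c' x y with hcdef
      have hc1 : c v u1 = α1 := by simp [hcdef]
      have hc2 : c u1 v = β1 := by simp [hcdef, hu1v]
      have hcold : ∀ x y, x ≠ v → y ≠ v → c x y = c' x y := by
        intro x y hx hy
        simp [hcdef, hx, hy]
      have hclass : ∀ x y, (Hgr G s).Adj x y →
          (x = v ∧ y = u1) ∨ (y = v ∧ x = u1) ∨ ((Hgr G s').Adj x y ∧ x ≠ v ∧ y ≠ v) := by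
        intro x y h
        by_cases hx : x = v
        · subst hx
          have hy : y ∈ (Hgr G s).neighborFinset x := ((Hgr G s).mem_neighborFinset _ _).mpr h
          rw [hNv] at hy
          exact Or.inl ⟨rfl, Finset.mem_singleton.mp hy⟩
        by_cases hy : y = v
        · subst hy
          have hx2 : x ∈ (Hgr G s).neighborFinset y := ((Hgr G s).mem_neighborFinset _ _).mpr
            ((Hgr G s).adj_symm h)
          rw [hNv] at hx2
          exact Or.inr (Or.inl ⟨rfl, Finset.mem_singleton.mp hx2⟩)
        · exact Or.inr (Or.inr ⟨hadj_old x y h hx hy, hx, hy⟩)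
      refine ⟨c, ?_, ?_⟩
      · intro x y x' y' h1' h2' hne12 hdisj
        rcases hclass x y h1' with ⟨rfl, rfl⟩ | ⟨rfl, rfl⟩ | ⟨ho1, hx, hy⟩ <;>
          rcases hclass x' y' h2' with ⟨rfl, rfl⟩ | ⟨rfl, rfl⟩ | ⟨ho2, hx', hy'⟩
        · exact absurd rfl hne12
        · rw [hc1, hc2]
          exact fun h => hβ1α h.symm
        · rw [hc1, hcold x' y' hx' hy']
          rcases hdisj with h | h | h
          · exact absurd h.symm hx'
          · subst h; exact hA1 y' ho2
          · exact absurd h.symm hy'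
        · rw [hc2, hc1]
          exact hβ1α
        · exact absurd rfl hne12
        · rw [hc2, hcold x' y' hx' hy']
          rcases hdisj with h | h | h
          · subst h; exact hB1n y' ho2
          · exact absurd h.symm hx'
          · subst h; exact hB1t x' ho2
        · rw [hcold x y hx hy, hc1]
          rcases hdisj with h | h | h
          · exact absurd h hx
          · exact absurd h hy
          · subst h; exact fun hh => hA1 y ho1 hh.symm
        · rw [hcold x y hx hy, hc2]
          rcases hdisj with h | h | h
          · subst h; exact fun hh => hB1n y ho1 hh.symm
          · subst h; exact fun hh => hB1t x ho1 hh.symm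
          · exact absurd h hx
        · rw [hcold x y hx hy, hcold x' y' hx' hy']
          exact hp' x y x' y' ho1 ho2 hne12 hdisj
      · intro u
        by_cases huv : u = v
        · subst huv
          rw [hNv, Finset.image_singleton]
          simp
        by_cases hu1 : u = u1
        · subst hu1
          have hN1 : (Hgr G s).neighborFinset u = insert v ((Hgr G s').neighborFinset u) := by
            ext z
            simp only [SimpleGraph.mem_neighborFinset, Finset.mem_insert]
            constructor
            · intro h
              by_cases hz : z = v
              · exact Or.inl hz
              · exact Or.inr (hadj_old u z h hu1v hz)
            · rintro (rfl | h)
              · exact (Hgr G s).adj_symm hvu1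
              · exact hadj_mono u z h

          rw [hN1, Finset.image_insert]
          have himg : ((Hgr G s').neighborFinset u).image (fun w => c w u) = Tw1 := by
            rw [hTw1def]
            apply Finset.image_congr
            intro z hz
            rw [Finset.mem_coe] at hz
            have hz' := ((Hgr G s').mem_neighborFinset _ _).mp hz
            have hzv : z ≠ v := by rintro rfl; exact hv_not_s' hz'.2.2
            exact hcold z u hzv hu1v
          rw [himg, hc1]
          rcases hF4 with hmem | hempty
          · rw [Finset.insert_eq_self.mpr hmem]
            exact hTw1card
          · rw [hempty]
            simp
        · have heq : (Hgr G s).neighborFinset u = (Hgr G s').neighborFinset u := by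
            ext z
            simp only [SimpleGraph.mem_neighborFinset]
            constructor
            · intro h
              have hz : z ≠ v := by
                rintro rfl
                have hu : u ∈ (Hgr G s).neighborFinset z :=
                  ((Hgr G s).mem_neighborFinset _ _).mpr ((Hgr G s).adj_symm h)
                rw [hNv] at hu
                exact hu1 (Finset.mem_singleton.mp hu)
              exact hadj_old u z h huv hz
            · exact hadj_mono u z
          rw [heq]
          have himg : ((Hgr G s').neighborFinset u).image (fun w => c w u) =
              ((Hgr G s').neighborFinset u).image (fun w => c' w u) := by
            apply Finset.image_congr
            intro z hz
            rw [Finset.mem_coe] at hz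
            have hz' := ((Hgr G s').mem_neighborFinset _ _).mp hz
            have hzv : z ≠ v := by rintro rfl; exact hv_not_s' hz'.2.2
            exact hcold z u hzv huv
          rw [himg]
          exact ht' u
    -- CASE 2
    · obtain ⟨u1, u2, hu12, hNv⟩ := Finset.card_eq_two.mp h2
      have hu21 : u2 ≠ u1 := fun h => hu12 h.symm
      have hvu1 : (Hgr G s).Adj v u1 := by
        have hm : u1 ∈ (Hgr G s).neighborFinset v := by
          rw [hNv]; exact Finset.mem_insert_self u1 {u2}
        exact ((Hgr G s).mem_neighborFinset _ _).mp hm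
      have hvu2 : (Hgr G s).Adj v u2 := by
        have hm : u2 ∈ (Hgr G s).neighborFinset v := by
          rw [hNv]; exact Finset.mem_insert_of_mem (Finset.mem_singleton_self u2)
        exact ((Hgr G s).mem_neighborFinset _ _).mp hm
      have hu1v : u1 ≠ v := hvu1.ne'
      have hu2v : u2 ≠ v := hvu2.ne'
      have hGvu1 : G.Adj v u1 := hvu1.1
      have hGvu2 : G.Adj v u2 := hvu2.1
      have hD1 : 1 ≤ G.maxDegree := by
        have hdv : (G.neighborFinset v).card = G.degree v := rfl
        have h1' : 0 < (G.neighborFinset v).card :=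
          Finset.card_pos.mpr ⟨u1, (G.mem_neighborFinset _ _).mpr hGvu1⟩
        have h2' := G.degree_le_maxDegree v
        omega
      set Nr1 := ((Hgr G s').neighborFinset u1).image (fun w => c' u1 w) with hNr1def
      set Tw1 := ((Hgr G s').neighborFinset u1).image (fun w => c' w u1) with hTw1def
      set Nr2 := ((Hgr G s').neighborFinset u2).image (fun w => c' u2 w) with hNr2def
      set Tw2 := ((Hgr G s').neighborFinset u2).image (fun w => c' w u2) with hTw2def
      have hdsub : ∀ u', (Hgr G s).Adj v u' →
          (Hgr G s').neighborFinset u' ⊆ (G.neighborFinset u').erase v := by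
        intro u' _ z hz
        have hz' := ((Hgr G s').mem_neighborFinset _ _).mp hz
        refine Finset.mem_erase.mpr ⟨?_, (G.mem_neighborFinset _ _).mpr hz'.1⟩
        rintro rfl
        exact hv_not_s' hz'.2.2
      have hdu : ∀ u', (Hgr G s).Adj v u' →
          ((Hgr G s').neighborFinset u').card ≤ G.maxDegree - 1 := by
        intro u' hadj
        have ha := Finset.card_le_card (hdsub u' hadj)
        rw [Finset.card_erase_of_mem ((G.mem_neighborFinset _ _).mpr (G.adj_symm hadj.1))] at ha
        have hb : (G.neighborFinset u').card = G.degree u' := rfl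
        have hc := G.degree_le_maxDegree u'
        omega
      have hNr1card : Nr1.card ≤ G.maxDegree - 1 :=
        le_trans Finset.card_image_le (hdu u1 hvu1)
      have hNr2card : Nr2.card ≤ G.maxDegree - 1 :=
        le_trans Finset.card_image_le (hdu u2 hvu2)
      have hTw1card : Tw1.card ≤ 2 := ht' u1
      have hTw2card : Tw2.card ≤ 2 := ht' u2
      obtain ⟨α1, hA1, hF4⟩ : ∃ α1 : Fin (G.maxDegree + 3),
          (∀ z, (Hgr G s').Adj u1 z → α1 ≠ c' u1 z) ∧ (α1 ∈ Tw1 ∨ Tw1 = ∅) := by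
        rcases Tw1.eq_empty_or_nonempty with hT | ⟨α1, hα1⟩
        · obtain ⟨α1, hα1⟩ := exists_notMem_of_card_lt Nr1 (by omega)
          refine ⟨α1, ?_, Or.inr hT⟩
          intro z hz h
          exact hα1 (h ▸ Finset.mem_image_of_mem _ (((Hgr G s').mem_neighborFinset _ _).mpr hz))
        · refine ⟨α1, ?_, Or.inl hα1⟩
          rw [hTw1def] at hα1
          obtain ⟨w, hw, rfl⟩ := Finset.mem_image.mp hα1
          intro z hz
          exact tw_ne_nr hp' ((Hgr G s').adj_symm (((Hgr G s').mem_neighborFinset _ _).mp hw)) hz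
      obtain ⟨α2, hA2, hα21, hF5⟩ : ∃ α2 : Fin (G.maxDegree + 3),
          (∀ z, (Hgr G s').Adj u2 z → α2 ≠ c' u2 z) ∧ α2 ≠ α1 ∧
          (α2 ∈ Tw2 ∨ Tw2 ⊆ {α1}) := by
        rcases (Tw2 \ {α1}).eq_empty_or_nonempty with hT | ⟨α2, hα2⟩
        · have hsubα : Tw2 ⊆ {α1} := by rwa [Finset.sdiff_eq_empty_iff_subset] at hT
          obtain ⟨α2, hα2⟩ := exists_notMem_of_card_lt (Nr2 ∪ {α1}) (by
            have h1' := Finset.card_union_le Nr2 ({α1} : Finset (Fin (G.maxDegree + 3)))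
            have h3' : ({α1} : Finset (Fin (G.maxDegree + 3))).card = 1 := Finset.card_singleton α1
            omega)
          simp only [Finset.mem_union, Finset.mem_singleton, not_or] at hα2
          refine ⟨α2, ?_, hα2.2, Or.inr hsubα⟩
          intro z hz h
          exact hα2.1 (h ▸ Finset.mem_image_of_mem _
            (((Hgr G s').mem_neighborFinset _ _).mpr hz))
        · obtain ⟨hm1, hm2⟩ := Finset.mem_sdiff.mp hα2
          have hα2ne : α2 ≠ α1 := fun h => hm2 (Finset.mem_singleton.mpr h)
          refine ⟨α2, ?_, hα2ne, Or.inl hm1⟩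
          have hm1' := hm1
          rw [hTw2def] at hm1'
          obtain ⟨w, hw, hweq⟩ := Finset.mem_image.mp hm1'
          intro z hz
          rw [← hweq]
          exact tw_ne_nr hp' ((Hgr G s').adj_symm (((Hgr G s').mem_neighborFinset _ _).mp hw)) hz
      have hcard12 : ({α1, α2} : Finset (Fin (G.maxDegree + 3))).card ≤ 2 :=
        (Finset.card_insert_le _ _).trans (by simp)
      obtain ⟨β1, hβ1⟩ := exists_notMem_of_card_lt (Nr1 ∪ Tw1 ∪ {α1, α2}) (by
        rcases hF4 with hmem | hempty
        · have hsub2 : Nr1 ∪ Tw1 ∪ {α1, α2} ⊆ Nr1 ∪ Tw1 ∪ {α2} := by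
            intro x hx
            simp only [Finset.mem_union, Finset.mem_insert, Finset.mem_singleton] at hx ⊢
            rcases hx with (hx | hx) | (hx | hx)
            · exact Or.inl (Or.inl hx)
            · exact Or.inl (Or.inr hx)
            · exact Or.inl (Or.inr (hx ▸ hmem))
            · exact Or.inr hx
          have hb := Finset.card_le_card hsub2
          have h1' := Finset.card_union_le (Nr1 ∪ Tw1) ({α2} : Finset (Fin (G.maxDegree + 3)))
          have h2' := Finset.card_union_le Nr1 Tw1
          have h3' : ({α2} : Finset (Fin (G.maxDegree + 3))).card = 1 := Finset.card_singleton α2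
          omega
        · rw [hempty]
          have h1' := Finset.card_union_le (Nr1 ∪ (∅ : Finset (Fin (G.maxDegree + 3)))) {α1, α2}
          have h2' := Finset.card_union_le Nr1 (∅ : Finset (Fin (G.maxDegree + 3)))
          simp only [Finset.card_empty] at h2'
          omega)
      simp only [Finset.mem_union, Finset.mem_insert, Finset.mem_singleton, not_or] at hβ1
      obtain ⟨⟨hβ1Nr, hβ1Tw⟩, hβ1α1, hβ1α2⟩ := hβ1
      obtain ⟨β2, hβ2⟩ := exists_notMem_of_card_lt (Nr2 ∪ Tw2 ∪ {α1, α2}) (by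
        rcases hF5 with hmem | hsubα
        · have hsub2 : Nr2 ∪ Tw2 ∪ {α1, α2} ⊆ Nr2 ∪ Tw2 ∪ {α1} := by
            intro x hx
            simp only [Finset.mem_union, Finset.mem_insert, Finset.mem_singleton] at hx ⊢
            rcases hx with (hx | hx) | (hx | hx)
            · exact Or.inl (Or.inl hx)
            · exact Or.inl (Or.inr hx)
            · exact Or.inr hx
            · exact Or.inl (Or.inr (hx ▸ hmem))
          have hb := Finset.card_le_card hsub2
          have h1' := Finset.card_union_le (Nr2 ∪ Tw2) ({α1} : Finset (Fin (G.maxDegree + 3)))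
          have h2' := Finset.card_union_le Nr2 Tw2
          have h3' : ({α1} : Finset (Fin (G.maxDegree + 3))).card = 1 := Finset.card_singleton α1
          omega
        · have hsub2 : Nr2 ∪ Tw2 ∪ {α1, α2} ⊆ Nr2 ∪ {α1, α2} := by
            intro x hx
            simp only [Finset.mem_union, Finset.mem_insert, Finset.mem_singleton] at hx ⊢
            rcases hx with (hx | hx) | hx
            · exact Or.inl hx
            · exact Or.inr (Or.inl (Finset.mem_singleton.mp (hsubα hx)))
            · exact Or.inr hx
          have hb := Finset.card_le_card hsub2
          have h1' := Finset.card_union_le Nr2 ({α1, α2} : Finset (Fin (G.maxDegree + 3)))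
          omega)
      simp only [Finset.mem_union, Finset.mem_insert, Finset.mem_singleton, not_or] at hβ2
      obtain ⟨⟨hβ2Nr, hβ2Tw⟩, hβ2α1, hβ2α2⟩ := hβ2
      have hB1n : ∀ z, (Hgr G s').Adj u1 z → β1 ≠ c' u1 z := by
        intro z hz h
        exact hβ1Nr (h ▸ Finset.mem_image_of_mem _ (((Hgr G s').mem_neighborFinset _ _).mpr hz))
      have hB1t : ∀ z, (Hgr G s').Adj z u1 → β1 ≠ c' z u1 := by
        intro z hz h
        exact hβ1Tw (h ▸ Finset.mem_image_of_mem _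
          (((Hgr G s').mem_neighborFinset _ _).mpr ((Hgr G s').adj_symm hz)))
      have hB2n : ∀ z, (Hgr G s').Adj u2 z → β2 ≠ c' u2 z := by
        intro z hz h
        exact hβ2Nr (h ▸ Finset.mem_image_of_mem _ (((Hgr G s').mem_neighborFinset _ _).mpr hz))
      have hB2t : ∀ z, (Hgr G s').Adj z u2 → β2 ≠ c' z u2 := by
        intro z hz h
        exact hβ2Tw (h ▸ Finset.mem_image_of_mem _
          (((Hgr G s').mem_neighborFinset _ _).mpr ((Hgr G s').adj_symm hz)))
      set c : V → V → Fin (G.maxDegree + 3) := fun x y =>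
        if x = v ∧ y = u1 then α1 else if x = v ∧ y = u2 then α2 else
        if x = u1 ∧ y = v then β1 else if x = u2 ∧ y = v then β2 else c' x y with hcdef
      have hcvu1 : c v u1 = α1 := by simp [hcdef]
      have hcvu2 : c v u2 = α2 := by simp [hcdef, hu21]
      have hcu1v : c u1 v = β1 := by simp [hcdef, hu1v]
      have hcu2v : c u2 v = β2 := by simp [hcdef, hu2v, hu21]
      have hcold : ∀ x y, x ≠ v → y ≠ v → c x y = c' x y := by
        intro x y hx hy
        simp [hcdef, hx, hy]
      have hclass : ∀ x y, (Hgr G s).Adj x y →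
          (x = v ∧ (y = u1 ∨ y = u2)) ∨ (y = v ∧ (x = u1 ∨ x = u2)) ∨
          ((Hgr G s').Adj x y ∧ x ≠ v ∧ y ≠ v) := by
        intro x y h
        by_cases hx : x = v
        · subst hx
          have hy : y ∈ (Hgr G s).neighborFinset x := ((Hgr G s).mem_neighborFinset _ _).mpr h
          rw [hNv] at hy
          rcases Finset.mem_insert.mp hy with h' | h'
          · exact Or.inl ⟨rfl, Or.inl h'⟩
          · exact Or.inl ⟨rfl, Or.inr (Finset.mem_singleton.mp h')⟩
        by_cases hy : y = v
        · subst hy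
          have hx2 : x ∈ (Hgr G s).neighborFinset y := ((Hgr G s).mem_neighborFinset _ _).mpr
            ((Hgr G s).adj_symm h)
          rw [hNv] at hx2
          rcases Finset.mem_insert.mp hx2 with h' | h'
          · exact Or.inr (Or.inl ⟨rfl, Or.inl h'⟩)
          · exact Or.inr (Or.inl ⟨rfl, Or.inr (Finset.mem_singleton.mp h')⟩)
        · exact Or.inr (Or.inr ⟨hadj_old x y h hx hy, hx, hy⟩)
      refine ⟨c, ?_, ?_⟩
      · intro x y x' y' h1' h2' hne12 hdisj
        rcases hclass x y h1' with ⟨rfl, rfl | rfl⟩ | ⟨rfl, rfl | rfl⟩ | ⟨ho1, hx, hy⟩ <;>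
          rcases hclass x' y' h2' with ⟨rfl, rfl | rfl⟩ | ⟨rfl, rfl | rfl⟩ | ⟨ho2, hx', hy'⟩
        -- first = (v,u1)
        · exact absurd rfl hne12
        · rw [hcvu1, hcvu2]; exact fun h => hα21 h.symm
        · rw [hcvu1, hcu1v]; exact fun h => hβ1α1 h.symm
        · rw [hcvu1, hcu2v]; exact fun h => hβ2α1 h.symm
        · rw [hcvu1, hcold x' y' hx' hy']
          rcases hdisj with h | h | h
          · exact absurd h.symm hx'
          · subst h; exact hA1 y' ho2
          · exact absurd h.symm hy'
        -- first = (v,u2)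
        · rw [hcvu2, hcvu1]; exact hα21
        · exact absurd rfl hne12
        · rw [hcvu2, hcu1v]; exact fun h => hβ1α2 h.symm
        · rw [hcvu2, hcu2v]; exact fun h => hβ2α2 h.symm
        · rw [hcvu2, hcold x' y' hx' hy']
          rcases hdisj with h | h | h
          · exact absurd h.symm hx'
          · subst h; exact hA2 y' ho2
          · exact absurd h.symm hy'
        -- first = (u1,v)
        · rw [hcu1v, hcvu1]; exact hβ1α1
        · rw [hcu1v, hcvu2]; exact hβ1α2
        · exact absurd rfl hne12
        · rcases hdisj with h | h | h
          · exact absurd h hu12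
          · exact absurd h.symm hu2v
          · exact absurd h hu1v
        · rw [hcu1v, hcold x' y' hx' hy']
          rcases hdisj with h | h | h
          · subst h; exact hB1n y' ho2
          · exact absurd h.symm hx'
          · subst h; exact hB1t x' ho2
        -- first = (u2,v)
        · rw [hcu2v, hcvu1]; exact hβ2α1
        · rw [hcu2v, hcvu2]; exact hβ2α2
        · rcases hdisj with h | h | h
          · exact absurd h hu21
          · exact absurd h.symm hu1v
          · exact absurd h hu2v
        · exact absurd rfl hne12
        · rw [hcu2v, hcold x' y' hx' hy']
          rcases hdisj with h | h | h
          · subst h; exact hB2n y' ho2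
          · exact absurd h.symm hx'
          · subst h; exact hB2t x' ho2
        -- first = old
        · rw [hcold x y hx hy, hcvu1]
          rcases hdisj with h | h | h
          · exact absurd h hx
          · exact absurd h hy
          · subst h; exact fun hh => hA1 y ho1 hh.symm
        · rw [hcold x y hx hy, hcvu2]
          rcases hdisj with h | h | h
          · exact absurd h hx
          · exact absurd h hy
          · subst h; exact fun hh => hA2 y ho1 hh.symm
        · rw [hcold x y hx hy, hcu1v]
          rcases hdisj with h | h | h
          · subst h; exact fun hh => hB1n y ho1 hh.symm
          · subst h; exact fun hh => hB1t x ho1 hh.symm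
          · exact absurd h hx
        · rw [hcold x y hx hy, hcu2v]
          rcases hdisj with h | h | h
          · subst h; exact fun hh => hB2n y ho1 hh.symm
          · subst h; exact fun hh => hB2t x ho1 hh.symm
          · exact absurd h hx
        · rw [hcold x y hx hy, hcold x' y' hx' hy']
          exact hp' x y x' y' ho1 ho2 hne12 hdisj
      · intro u
        by_cases huv : u = v
        · subst huv
          rw [hNv, Finset.image_insert, Finset.image_singleton]
          exact (Finset.card_insert_le _ _).trans (by simp)
        by_cases hu1 : u = u1
        · subst hu1
          have hN1 : (Hgr G s).neighborFinset u = insert v ((Hgr G s').neighborFinset u) := by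
            ext z
            simp only [SimpleGraph.mem_neighborFinset, Finset.mem_insert]
            constructor
            · intro h
              by_cases hz : z = v
              · exact Or.inl hz
              · exact Or.inr (hadj_old u z h hu1v hz)
            · rintro (rfl | h)
              · exact (Hgr G s).adj_symm hvu1
              · exact hadj_mono u z h
          rw [hN1, Finset.image_insert]
          have himg : ((Hgr G s').neighborFinset u).image (fun w => c w u) = Tw1 := by
            rw [hTw1def]
            apply Finset.image_congr
            intro z hz
            rw [Finset.mem_coe] at hz
            have hz' := ((Hgr G s').mem_neighborFinset _ _).mp hz
            have hzv : z ≠ v := by rintro rfl; exact hv_not_s' hz'.2.2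
            exact hcold z u hzv hu1v
          rw [himg, hcvu1]
          rcases hF4 with hmem | hempty
          · rw [Finset.insert_eq_self.mpr hmem]
            exact hTw1card
          · rw [hempty]
            simp
        by_cases hu2 : u = u2
        · subst hu2
          have hN2 : (Hgr G s).neighborFinset u = insert v ((Hgr G s').neighborFinset u) := by
            ext z
            simp only [SimpleGraph.mem_neighborFinset, Finset.mem_insert]
            constructor
            · intro h
              by_cases hz : z = v
              · exact Or.inl hz
              · exact Or.inr (hadj_old u z h hu2v hz)
            · rintro (rfl | h)
              · exact (Hgr G s).adj_symm hvu2
              · exact hadj_mono u z h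
          rw [hN2, Finset.image_insert]
          have himg : ((Hgr G s').neighborFinset u).image (fun w => c w u) = Tw2 := by
            rw [hTw2def]
            apply Finset.image_congr
            intro z hz
            rw [Finset.mem_coe] at hz
            have hz' := ((Hgr G s').mem_neighborFinset _ _).mp hz
            have hzv : z ≠ v := by rintro rfl; exact hv_not_s' hz'.2.2
            exact hcold z u hzv hu2v
          rw [himg, hcvu2]
          rcases hF5 with hmem | hsubα
          · rw [Finset.insert_eq_self.mpr hmem]
            exact hTw2card
          · have h1' : Tw2.card ≤ 1 := (Finset.card_le_card hsubα).trans (by simp)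
            have h2' := Finset.card_insert_le α2 Tw2
            omega
        · have heq : (Hgr G s).neighborFinset u = (Hgr G s').neighborFinset u := by
            ext z
            simp only [SimpleGraph.mem_neighborFinset]
            constructor
            · intro h
              have hz : z ≠ v := by
                rintro rfl
                have hu : u ∈ (Hgr G s).neighborFinset z :=
                  ((Hgr G s).mem_neighborFinset _ _).mpr ((Hgr G s).adj_symm h)
                rw [hNv] at hu
                rcases Finset.mem_insert.mp hu with h' | h'
                · exact hu1 h'
                · exact hu2 (Finset.mem_singleton.mp h')
              exact hadj_old u z h huv hz
            · exact hadj_mono u z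
          rw [heq]
          have himg : ((Hgr G s').neighborFinset u).image (fun w => c w u) =
              ((Hgr G s').neighborFinset u).image (fun w => c' w u) := by
            apply Finset.image_congr
            intro z hz
            rw [Finset.mem_coe] at hz
            have hz' := ((Hgr G s').mem_neighborFinset _ _).mp hz
            have hzv : z ≠ v := by rintro rfl; exact hv_not_s' hz'.2.2
            exact hcold z u hzv huv
          rw [himg]
          exact ht' u

end mainsec

/-- Every simple outerplanar graph has incidence chromatic number at most Δ + 3. -/
theorem stmt_14 {V : Type*} [Fintype V] (G : SimpleGraph V) [DecidableRel G.Adj]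
    (hout : Outerplanar G) : HasProperIncColoring G (G.maxDegree + 3) := by
  classical
  obtain ⟨f, hf, hbook⟩ := hout
  obtain ⟨c, hp, -⟩ := main_lem G f hf hbook Finset.univ.card Finset.univ le_rfl
  refine ⟨c, ?_⟩
  intro v w v' w' h1 h2 hne hdisj
  exact hp v w v' w' ⟨h1, Finset.mem_univ _, Finset.mem_univ _⟩
    ⟨h2, Finset.mem_univ _, Finset.mem_univ _⟩ hne hdisj
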